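/- arXiv:2411.18418 — 2 statements merged into one kernel-verified Lean document; each statement's English description precedes it below -/
import Mathlib

section
/- Let (F_n, T_n, q_n) be an odometer datum with inverse limit Z and induced odometer T : Z → Z. Suppose there exist m ≥ 1 and n₀ ∈ ℕ such that for every n ≥ n₀ the permutation T_n has exactly m orbits on F_n. Then Z is the disjoint union of m nonempty clopen T-invariant subsets, and the restriction of T to each of these subsets is minimal (every orbit in the subset is dense in it). -/
/-- A set `s ⊆ F` is an orbit of the permutation `T` if it is the full `ℤ`-orbit of
some point. -/
def IsOrbitOf {F : Type*} (T : Equiv.Perm F) (s : Set F) : Prop :=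
  ∃ x : F, s = Set.range fun k : ℤ => (T ^ k) x

section QLE
variable {F : ℕ → Type*}

/-- Composite bonding map `F j → F i` for `i ≤ j`. -/
def qle (q : ∀ n, F (n + 1) → F n) : ∀ j i, i ≤ j → F j → F i
  | 0, 0, _, x => x
  | 0, _+1, h, _ => absurd h (by omega)
  | j+1, i, _, x =>
    if h' : i = j + 1 then h'.symm ▸ x else qle q j i (by omega) (q j x)

theorem qle_self (q : ∀ n, F (n + 1) → F n) (j : ℕ) (h : j ≤ j) (x : F j) :
    qle q j j h x = x := by
  cases j with
  | zero => rfl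
  | succ j => simp [qle]

theorem qle_succ (q : ∀ n, F (n + 1) → F n) {i j : ℕ} (h : i ≤ j) (h2 : i ≤ j + 1)
    (x : F (j + 1)) : qle q (j+1) i h2 x = qle q j i h (q j x) := by
  rw [qle, dif_neg (by omega)]

theorem qle_step (q : ∀ n, F (n + 1) → F n) :
    ∀ (j i : ℕ) (h : i + 1 ≤ j) (x : F j),
      q i (qle q j (i+1) h x) = qle q j i (by omega) x := by
  intro j
  induction j with
  | zero => intro i h x; omega
  | succ j ih =>
    intro i h x
    rcases Nat.lt_or_ge (i+1) (j+1) with hlt | hge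
    · rw [qle_succ q (by omega) h, qle_succ q (by omega) (by omega), ih i (by omega)]
    · have hij : i = j := by omega
      subst hij
      rw [qle_self, qle_succ q (le_refl i) (by omega), qle_self]

theorem qle_coh (q : ∀ n, F (n + 1) → F n) {z : ∀ n, F n}
    (hz : ∀ n, q n (z (n + 1)) = z n) :
    ∀ (j i : ℕ) (h : i ≤ j), qle q j i h (z j) = z i := by
  intro j
  induction j with
  | zero => intro i h; interval_cases i; exact qle_self q 0 h _
  | succ j ih =>
    intro i h
    rcases Nat.lt_or_ge i (j+1) with hlt | hge
    · rw [qle_succ q (by omega) h, hz j, ih i (by omega)]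
    · have : i = j + 1 := by omega
      subst this; exact qle_self q _ h _

/-- Recursive lift of a point of `F N` through the surjections `q`. -/
noncomputable def qlift (q : ∀ n, F (n + 1) → F n) (hq : ∀ n, Function.Surjective (q n))
    (N : ℕ) (x : F N) : ∀ k, F (N + k)
  | 0 => x
  | k+1 => (hq (N+k) (qlift q hq N x k)).choose

theorem qlift_spec (q : ∀ n, F (n + 1) → F n) (hq : ∀ n, Function.Surjective (q n))
    (N : ℕ) (x : F N) (k : ℕ) :
    q (N+k) (qlift q hq N x (k+1)) = qlift q hq N x k :=
  (hq (N+k) (qlift q hq N x k)).choose_spec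

/-- Projections of the inverse limit are surjective. -/
theorem proj_surjective (q : ∀ n, F (n + 1) → F n) (hq : ∀ n, Function.Surjective (q n))
    (N : ℕ) (x : F N) :
    ∃ z : { z : ∀ n, F n // ∀ n, q n (z (n + 1)) = z n }, z.1 N = x := by
  set v := qlift q hq N x with hv
  refine ⟨⟨fun n => qle q (N + n) n (by omega) (v n), ?_⟩, ?_⟩
  · intro n
    show q n (qle q (N + (n+1)) (n+1) (by omega) (v (n+1))) = qle q (N + n) n (by omega) (v n)
    rw [qle_step q (N + (n+1)) n (by omega) (v (n+1))]
    show qle q ((N + n) + 1) n (by omega) (v (n+1)) = qle q (N + n) n (by omega) (v n)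
    rw [qle_succ q (by omega) (by omega)]
    congr 1
    exact qlift_spec q hq N x n
  · have key : ∀ k, qle q (N + k) N (by omega) (v k) = x := by
      intro k
      induction k with
      | zero => exact qle_self q N (by omega) x
      | succ k ih =>
        show qle q ((N + k) + 1) N (by omega) (v (k+1)) = x
        rw [qle_succ q (by omega) (by omega)]
        rw [show q (N+k) (v (k+1)) = v k from qlift_spec q hq N x k]
        exact ih
    exact key N
end QLE

section Orbits
variable {G : Type*} (T : Equiv.Perm G)

theorem mem_own_orbit (x : G) : x ∈ Set.range fun k : ℤ => (T ^ k) x :=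
  ⟨0, by simp⟩

theorem orbit_zpow_mem {x y : G} (h : y ∈ Set.range fun k : ℤ => (T ^ k) x) (j : ℤ) :
    (T ^ j) y ∈ Set.range fun k : ℤ => (T ^ k) x := by
  obtain ⟨k, rfl⟩ := h
  exact ⟨j + k, by show (T ^ (j + k)) x = (T ^ j) ((T ^ k) x); rw [zpow_add]; rfl⟩

theorem orbit_eq_of_mem {x y : G} (h : y ∈ Set.range fun k : ℤ => (T ^ k) x) :
    (Set.range fun k : ℤ => (T ^ k) y) = Set.range fun k : ℤ => (T ^ k) x := by
  obtain ⟨j, rfl⟩ := h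
  ext b
  constructor
  · rintro ⟨k, rfl⟩
    exact ⟨k + j, by show (T ^ (k + j)) x = (T ^ k) ((T ^ j) x); rw [zpow_add]; rfl⟩
  · rintro ⟨k, rfl⟩
    refine ⟨k - j, ?_⟩
    show (T ^ (k - j)) ((T ^ j) x) = (T ^ k) x
    rw [← Equiv.Perm.mul_apply, ← zpow_add, sub_add_cancel]

theorem sameOrbit_of_mem_orbit {s : Set G} (hs : IsOrbitOf T s) {a b : G}
    (ha : a ∈ s) (hb : b ∈ s) : ∃ k : ℤ, (T ^ k) a = b := by
  obtain ⟨x, rfl⟩ := hs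
  obtain ⟨j, rfl⟩ := ha
  obtain ⟨l, rfl⟩ := hb
  refine ⟨l - j, ?_⟩
  show (T ^ (l - j)) ((T ^ j) x) = (T ^ l) x
  rw [← Equiv.Perm.mul_apply, ← zpow_add, sub_add_cancel]

end Orbits

/-- Surjectivity together with equal (finite) orbit counts transfers "same orbit"
upward through a bonding map. -/
theorem sameOrbit_lift {A B : Type*} [Finite A] [Finite B] (TA : Equiv.Perm A)
    (TB : Equiv.Perm B) (p : A → B) (hp : Function.Surjective p)
    (hc : ∀ k : ℤ, ∀ x, p ((TA ^ k) x) = (TB ^ k) (p x))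
    (hcard : Nat.card { s : Set A // IsOrbitOf TA s }
      = Nat.card { s : Set B // IsOrbitOf TB s })
    (x y : A) (h : ∃ k : ℤ, (TB ^ k) (p x) = p y) : ∃ k : ℤ, (TA ^ k) x = y := by
  have himg : ∀ a : A, p '' (Set.range fun k : ℤ => (TA ^ k) a)
      = Set.range fun k : ℤ => (TB ^ k) (p a) := by
    intro a
    rw [← Set.range_comp]
    exact congrArg Set.range (funext fun k => hc k a)
  let φ : { s : Set A // IsOrbitOf TA s } → { s : Set B // IsOrbitOf TB s } :=
    fun s => ⟨p '' s.1, by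
      obtain ⟨a, ha⟩ := s.2
      exact ⟨p a, by rw [ha, himg]⟩⟩
  have hφsurj : Function.Surjective φ := by
    rintro ⟨s, b, rfl⟩
    obtain ⟨a, rfl⟩ := hp b
    exact ⟨⟨Set.range fun k : ℤ => (TA ^ k) a, a, rfl⟩, Subtype.ext (himg a)⟩
  have hφinj : Function.Injective φ :=
    ((Nat.bijective_iff_surjective_and_card φ).2 ⟨hφsurj, hcard⟩).1
  have key : φ ⟨_, x, rfl⟩ = φ ⟨_, y, rfl⟩ := by
    apply Subtype.ext
    show p '' _ = p '' _
    rw [himg, himg]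
    obtain ⟨k, hk⟩ := h
    exact (orbit_eq_of_mem TB ⟨k, hk⟩).symm
  have heq := hφinj key
  have hset : (Set.range fun k : ℤ => (TA ^ k) x) = Set.range fun k : ℤ => (TA ^ k) y :=
    congrArg Subtype.val heq
  have hy : y ∈ Set.range fun k : ℤ => (TA ^ k) x := by
    rw [hset]; exact mem_own_orbit TA y
  exact hy

theorem q_zpow_comm {F : ℕ → Type*} (T : ∀ n, Equiv.Perm (F n)) (q : ∀ n, F (n + 1) → F n)
    (hcomm : ∀ n x, q n (T (n + 1) x) = T n (q n x)) (n : ℕ) (k : ℤ) (x : F (n + 1)) :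
    q n ((T (n + 1) ^ k) x) = (T n ^ k) (q n x) := by
  have hinv : ∀ x, q n ((T (n + 1))⁻¹ x) = (T n)⁻¹ (q n x) := by
    intro x
    have h1 := hcomm n ((T (n + 1))⁻¹ x)
    rw [show T (n + 1) ((T (n + 1))⁻¹ x) = x from (T (n + 1)).apply_symm_apply x] at h1
    rw [h1, show (T n)⁻¹ (T n (q n ((T (n + 1))⁻¹ x))) = q n ((T (n + 1))⁻¹ x) from (T n).symm_apply_apply _]
  induction k using Int.induction_on generalizing x with
  | zero => simp
  | succ k ih =>
    rw [zpow_add_one, zpow_add_one, Equiv.Perm.mul_apply, Equiv.Perm.mul_apply, ih, hcomm]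
  | pred k ih =>
    rw [zpow_sub_one, zpow_sub_one, Equiv.Perm.mul_apply, Equiv.Perm.mul_apply, ih, hinv]

/-- The odometer induced on the inverse limit
`Z = { z ∈ ∏ n, F n | ∀ n, q n (z (n+1)) = z n }`
by a compatible sequence of bijections `T n : F n ≃ F n`. -/
def odoPerm (F : ℕ → Type*) (T : ∀ n, Equiv.Perm (F n)) (q : ∀ n, F (n + 1) → F n)
    (hcomm : ∀ n x, q n (T (n + 1) x) = T n (q n x)) :
    Equiv.Perm { z : ∀ n, F n // ∀ n, q n (z (n + 1)) = z n } where
  toFun z := ⟨fun n => T n (z.1 n), fun n => by rw [hcomm, z.2]⟩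
  invFun z := ⟨fun n => (T n).symm (z.1 n), fun n => by
    rw [Equiv.eq_symm_apply, ← hcomm, Equiv.apply_symm_apply, z.2]⟩
  left_inv z := Subtype.ext (funext fun n => (T n).symm_apply_apply _)
  right_inv z := Subtype.ext (funext fun n => (T n).apply_symm_apply _)

theorem odoPerm_zpow_apply (F : ℕ → Type*) (T : ∀ n, Equiv.Perm (F n))
    (q : ∀ n, F (n + 1) → F n)
    (hcomm : ∀ n x, q n (T (n + 1) x) = T n (q n x)) (k : ℤ)
    (z : { z : ∀ n, F n // ∀ n, q n (z (n + 1)) = z n }) (n : ℕ) :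
    (((odoPerm F T q hcomm) ^ k) z).1 n = ((T n) ^ k) (z.1 n) := by
  induction k using Int.induction_on generalizing z with
  | zero => simp
  | succ k ih =>
    rw [zpow_add_one, zpow_add_one, Equiv.Perm.mul_apply, Equiv.Perm.mul_apply, ih]
    rfl
  | pred k ih =>
    rw [zpow_sub_one, zpow_sub_one, Equiv.Perm.mul_apply, Equiv.Perm.mul_apply, ih]
    rfl

/-- **Case (2) of Theorem 5.3 (dynamical core).**
Let `(F n, T n, q n)` be an odometer datum with inverse limit `Z` and induced odometer
`T`.  If there are `m ≥ 1` and `n₀` such that for every `n ≥ n₀` the permutation `T n`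
has exactly `m` orbits on `F n`, then `Z` is the disjoint union of `m` nonempty clopen
`T`-invariant subsets, on each of which `T` is minimal (every orbit is dense in it). -/
theorem odometer_eventually_m_orbits_decomposition
    (F : ℕ → Type*) [∀ n, TopologicalSpace (F n)] [∀ n, DiscreteTopology (F n)]
    [∀ n, Fintype (F n)] [∀ n, Nonempty (F n)]
    (T : ∀ n, Equiv.Perm (F n)) (q : ∀ n, F (n + 1) → F n)
    (hq : ∀ n, Function.Surjective (q n))
    (hcomm : ∀ n x, q n (T (n + 1) x) = T n (q n x))
    (m : ℕ) (hm : 1 ≤ m) (n₀ : ℕ)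
    (horb : ∀ n ≥ n₀, Nat.card { s : Set (F n) // IsOrbitOf (T n) s } = m) :
    ∃ C : Fin m → Set { z : ∀ n, F n // ∀ n, q n (z (n + 1)) = z n },
      (∀ i, (C i).Nonempty) ∧
      (∀ i, IsClopen (C i)) ∧
      Pairwise (Function.onFun Disjoint C) ∧
      (⋃ i, C i) = Set.univ ∧
      (∀ i, (odoPerm F T q hcomm) '' (C i) = C i) ∧
      (∀ i, ∀ z ∈ C i,
        C i ⊆ closure (Set.range fun k : ℤ => ((odoPerm F T q hcomm) ^ k) z)) := by
  classical
  set P : Equiv.Perm { z : ∀ n, F n // ∀ n, q n (z (n + 1)) = z n } :=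
    odoPerm F T q hcomm with hP
  have : Fintype { s : Set (F n₀) // IsOrbitOf (T n₀) s } := Fintype.ofFinite _
  let e : Fin m ≃ { s : Set (F n₀) // IsOrbitOf (T n₀) s } :=
    (Fintype.equivFinOfCardEq (by rw [← Nat.card_eq_fintype_card, horb n₀ le_rfl])).symm
  refine ⟨fun i => { z | z.1 n₀ ∈ (e i).1 }, ?_, ?_, ?_, ?_, ?_, ?_⟩
  · -- nonempty
    intro i
    obtain ⟨x, hx⟩ := (e i).2
    obtain ⟨z, hz⟩ := proj_surjective q hq n₀ x
    refine ⟨z, ?_⟩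
    show z.1 n₀ ∈ (e i).1
    rw [hx, hz]
    exact mem_own_orbit (T n₀) x
  · -- clopen
    intro i
    have hc : Continuous fun z : { z : ∀ n, F n // ∀ n, q n (z (n + 1)) = z n } => z.1 n₀ :=
      (continuous_apply n₀).comp continuous_subtype_val
    exact (isClopen_discrete ((e i).1)).preimage hc
  · -- pairwise disjoint
    intro i j hij
    rw [Function.onFun, Set.disjoint_left]
    intro z hzi hzj
    apply hij
    have key : ∀ a : Fin m, z ∈ { z : { z : ∀ n, F n // ∀ n, q n (z (n + 1)) = z n } |
        z.1 n₀ ∈ (e a).1 } →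
        (e a).1 = Set.range fun k : ℤ => ((T n₀) ^ k) (z.1 n₀) := by
      intro a ha
      obtain ⟨x, hx⟩ := (e a).2
      rw [hx]
      exact (orbit_eq_of_mem (T n₀) (hx ▸ ha)).symm
    have : e i = e j := Subtype.ext ((key i hzi).trans (key j hzj).symm)
    exact e.injective this
  · -- union is everything
    ext z
    simp only [Set.mem_iUnion, Set.mem_univ, iff_true]
    refine ⟨e.symm ⟨Set.range fun k : ℤ => ((T n₀) ^ k) (z.1 n₀), z.1 n₀, rfl⟩, ?_⟩
    show z.1 n₀ ∈ (e (e.symm _)).1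
    rw [e.apply_symm_apply]
    exact mem_own_orbit (T n₀) (z.1 n₀)
  · -- invariance
    intro i
    obtain ⟨x, hx⟩ := (e i).2
    ext z
    simp only [Set.mem_image]
    constructor
    · rintro ⟨y, hy, rfl⟩
      show (P y).1 n₀ ∈ (e i).1
      have h1 : (P y).1 n₀ = ((T n₀) ^ (1 : ℤ)) (y.1 n₀) := by rw [zpow_one]; rfl
      rw [h1, hx]
      exact orbit_zpow_mem (T n₀) (hx ▸ hy) 1
    · intro hz
      refine ⟨P.symm z, ?_, P.apply_symm_apply z⟩
      show (P.symm z).1 n₀ ∈ (e i).1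
      have h1 : (P.symm z).1 n₀ = ((T n₀) ^ (-1 : ℤ)) (z.1 n₀) := by
        rw [zpow_neg_one]; rfl
      rw [h1, hx]
      exact orbit_zpow_mem (T n₀) (hx ▸ hz) (-1)
  · -- minimality
    intro i z hz w hw
    have same : ∀ n, n₀ ≤ n → ∃ k : ℤ, ((T n) ^ k) (z.1 n) = w.1 n := by
      intro n hn
      induction n, hn using Nat.le_induction with
      | base => exact sameOrbit_of_mem_orbit (T n₀) (e i).2 hz hw
      | succ n hn ih =>
        refine sameOrbit_lift (T (n+1)) (T n) (q n) (hq n)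
          (fun k x => q_zpow_comm T q hcomm n k x)
          (by rw [horb (n+1) (by omega), horb n hn]) (z.1 (n+1)) (w.1 (n+1)) ?_
        rw [z.2 n, w.2 n]
        exact ih
    rw [mem_closure_iff]
    intro U hU hwU
    obtain ⟨V, hVopen, hUV⟩ := isOpen_induced_iff.mp hU
    have hwV : w.1 ∈ V := by rw [← hUV] at hwU; exact hwU
    obtain ⟨I, u, hu, hIV⟩ := isOpen_pi_iff.mp hVopen w.1 hwV
    set n : ℕ := max (I.sup id) n₀ with hn
    obtain ⟨k, hk⟩ := same n (le_max_right _ _)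
    have hcoord : ∀ a, a ≤ n → ((P ^ k) z).1 a = w.1 a := by
      intro a ha
      have h1 := qle_coh q ((P ^ k) z).2 n a ha
      have h2 := qle_coh q w.2 n a ha
      rw [← h1, ← h2]
      congr 1
      rw [odoPerm_zpow_apply]
      exact hk
    refine ⟨(P ^ k) z, ?_, k, rfl⟩
    rw [← hUV]
    refine Set.mem_preimage.mpr (hIV ?_)
    intro a ha
    have : a ≤ n := le_trans (Finset.le_sup (f := id) ha) (le_max_left _ _)
    rw [hcoord a this]
    exact (hu a ha).2
end

section
/- Let (F_n, T_n, q_n) be an odometer datum with inverse limit Z and induced odometer T : Z → Z. If the number of orbits of T_n on F_n is unbounded as n → ∞, then Z contains an infinite family of pairwise disjoint nonempty closed T-invariant subsets; in particular, T has infinitely many distinct minimal sets in Z. -/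
section Chain

variable {F : ℕ → Type*} (q : ∀ n, F (n + 1) → F n)

/-- Iterated bonding map `F (m + k) → F m`. -/
def dqIter (m : ℕ) : ∀ k, F (m + k) → F m
  | 0, y => y
  | k + 1, y => dqIter m k (q (m + k) y)

lemma dqIter_surjective (hq : ∀ n, Function.Surjective (q n)) (m : ℕ) :
    ∀ k, Function.Surjective (dqIter q m k)
  | 0 => Function.surjective_id
  | k + 1 => (dqIter_surjective hq m k).comp (hq (m + k))

lemma mem_cast {S : ∀ m, Set (F m)} {a b : ℕ} (h : a = b) {w : F a} (hw : w ∈ S a) :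
    cast (congrArg F h) w ∈ S b := by subst h; exact hw

lemma q_cast {a b : ℕ} (h : a = b) (w : F (a + 1)) :
    q b (cast (congrArg F (by rw [h])) w) = cast (congrArg F h) (q a w) := by
  subst h; rfl

lemma q_dqIter (m : ℕ) : ∀ (k : ℕ) (w : F (m + (k + 1))),
    q m (dqIter q (m + 1) k (cast (congrArg F (by omega)) w)) = dqIter q m (k + 1) w
  | 0, w => by
    show q m (cast _ w) = q m w
    rw [cast_eq]
  | k + 1, w => by
    show q m (dqIter q (m + 1) k (q (m + 1 + k) (cast _ w))) = dqIter q m (k + 1) (q (m + k + 1) w)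
    rw [q_cast q (show m + (k + 1) = m + 1 + k by omega) w]
    exact q_dqIter m k (q (m + (k + 1)) w)

end Chain

section Koenig

lemma iInter_nonempty_of_antitone {α : Type*} [Finite α] (A : ℕ → Set α)
    (hA : ∀ k, A (k + 1) ⊆ A k) (hne : ∀ k, (A k).Nonempty) : (⋂ k, A k).Nonempty := by
  have hmono : ∀ {k k'}, k ≤ k' → A k' ⊆ A k := by
    intro k k' h
    induction k' with
    | zero => cases Nat.le_zero.mp h; exact fun _ h => h
    | succ k' ih =>
      rcases Nat.lt_or_ge k (k' + 1) with h' | h'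
      · exact fun y hy => ih (Nat.lt_succ_iff.mp h') (hA k' hy)
      · cases le_antisymm h h'; exact fun _ h => h
  by_contra hempty
  have : ∀ y : α, ∃ k, y ∉ A k := by
    intro y; by_contra hy; push_neg at hy
    exact hempty ⟨y, Set.mem_iInter.mpr hy⟩
  choose kf hkf using this
  have := Fintype.ofFinite α
  set K := Finset.univ.sup kf with hK
  obtain ⟨y, hy⟩ := hne K
  exact hkf y (hmono (Finset.le_sup (Finset.mem_univ y)) hy)

variable {F : ℕ → Type*} [∀ n, Finite (F n)] (q : ∀ n, F (n + 1) → F n)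

theorem exists_chain (S : ∀ m, Set (F m)) (hS : ∀ m, (S m).Nonempty)
    (hstab : ∀ m y, y ∈ S (m + 1) → q m y ∈ S m) :
    ∃ z : ∀ m, F m, (∀ m, q m (z (m + 1)) = z m) ∧ ∀ m, z m ∈ S m := by
  classical
  set A : ∀ m, ℕ → Set (F m) := fun m k => dqIter q m k '' S (m + k) with hAdef
  have hdqS : ∀ m k w, w ∈ S (m + k) → dqIter q m k w ∈ S m := by
    intro m k
    induction k with
    | zero => exact fun w hw => hw
    | succ k ih => exact fun w hw => ih (q (m + k) w) (hstab (m + k) w hw)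
  have hAanti : ∀ m k, A m (k + 1) ⊆ A m k := by
    rintro m k y ⟨w, hw, rfl⟩
    exact ⟨q (m + k) w, hstab (m + k) w hw, rfl⟩
  have hAne : ∀ m k, (A m k).Nonempty := fun m k => ((hS (m + k)).image _)
  set Good : ∀ m, Set (F m) := fun m => ⋂ k, A m k with hGood
  have hGoodne : ∀ m, (Good m).Nonempty := fun m =>
    iInter_nonempty_of_antitone (A m) (hAanti m) (hAne m)
  have hGoodS : ∀ m, Good m ⊆ S m := by
    intro m y hy
    have : y ∈ A m 0 := Set.mem_iInter.mp hy 0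
    rcases this with ⟨w, hw, rfl⟩
    exact hw
  have hstep : ∀ m y, y ∈ Good m → ∃ y', q m y' = y ∧ y' ∈ Good (m + 1) := by
    intro m y hy
    set B : ℕ → Set (F (m + 1)) := fun k => {y' | y' ∈ A (m + 1) k ∧ q m y' = y} with hB
    have hBne : ∀ k, (B k).Nonempty := by
      intro k
      have : y ∈ A m (k + 1) := Set.mem_iInter.mp hy (k + 1)
      rcases this with ⟨w, hw, rfl⟩
      refine ⟨dqIter q (m + 1) k (cast (congrArg F (by omega : m + (k+1) = m + 1 + k)) w),
        ⟨⟨_, mem_cast (by omega : m + (k+1) = m + 1 + k) hw, rfl⟩, ?_⟩⟩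
      exact q_dqIter q m k w
    have hBanti : ∀ k, B (k + 1) ⊆ B k := fun k y' hy' => ⟨hAanti (m + 1) k hy'.1, hy'.2⟩
    obtain ⟨y', hy'⟩ := iInter_nonempty_of_antitone B hBanti hBne
    have h1 : ∀ k, y' ∈ A (m + 1) k := fun k => (Set.mem_iInter.mp hy' k).1
    exact ⟨y', (Set.mem_iInter.mp hy' 0).2, Set.mem_iInter.mpr h1⟩
  choose sf hsf1 hsf2 using hstep
  obtain ⟨y0, hy0⟩ := hGoodne 0
  let g : ∀ m, {y : F m // y ∈ Good m} := fun m =>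
    Nat.rec ⟨y0, hy0⟩ (fun m p => ⟨sf m p.1 p.2, hsf2 m p.1 p.2⟩) m
  exact ⟨fun m => (g m).1, fun m => hsf1 m (g m).1 (g m).2, fun m => hGoodS m (g m).2⟩

end Koenig

section Extend

variable {F : ℕ → Type*} (q : ∀ n, F (n + 1) → F n)

lemma cast_apply_eq {G : ℕ → Type*} (w : ∀ j, G j) {a b : ℕ} (h : a = b) :
    cast (congrArg G h) (w a) = w b := by subst h; rfl

lemma eq_of_apply_cast {a b : ℕ} (h : a = b) (z : ∀ m, F m) (y : F a)
    (hz : z b = cast (congrArg F h) y) : z a = y := by subst h; simpa using hz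

theorem extend_down : ∀ (n : ℕ) (w : ∀ j, F (n + j)),
    (∀ j, q (n + j) (w (j + 1)) = w j) →
    ∃ z : ∀ m, F m, (∀ m, q m (z (m + 1)) = z m) ∧ ∀ j, z (n + j) = w j := by
  intro n
  induction n with
  | zero =>
    intro w hw
    refine ⟨fun m => cast (congrArg F (Nat.zero_add m)) (w m), fun m => ?_, fun j => ?_⟩
    · exact (q_cast q (Nat.zero_add m) (w (m + 1))).trans (congrArg (cast _) (hw m))
    · exact cast_apply_eq w (Nat.zero_add j)
  | succ n ih =>
    intro w hw
    set w' : ∀ j, F (n + j) := fun j =>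
      Nat.casesOn j (q n (w 0))
        (fun j => cast (congrArg F (Nat.add_right_comm n 1 j)) (w j)) with hw'def
    have hw' : ∀ j, q (n + j) (w' (j + 1)) = w' j := by
      intro j
      cases j with
      | zero => exact congrArg (q n) (cast_eq _ (w 0))
      | succ j =>
        exact (q_cast q (Nat.add_right_comm n 1 j) (w (j + 1))).trans
          (congrArg (cast _) (hw j))
    obtain ⟨z, hz, hzw'⟩ := ih w' hw'
    refine ⟨z, hz, fun j => ?_⟩
    exact eq_of_apply_cast (F := F) (Nat.add_right_comm n 1 j) z (w j) (hzw' (j + 1))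

theorem exists_chain_through [∀ n, Finite (F n)]
    (hq : ∀ n, Function.Surjective (q n)) (n : ℕ) (x : F n) :
    ∃ z : ∀ m, F m, (∀ m, q m (z (m + 1)) = z m) ∧ z n = x := by
  obtain ⟨w, hwc, hwS⟩ := exists_chain (F := fun j => F (n + j)) (fun j => q (n + j))
    (fun j => {y | dqIter q n j y = x})
    (fun j => (dqIter_surjective q hq n j x).imp fun y hy => hy)
    (fun j y hy => hy)
  obtain ⟨z, hz, hzw⟩ := extend_down q n w hwc
  exact ⟨z, hz, (hzw 0).trans (hwS 0)⟩

end Extend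

section PermAux

lemma zpow_semiconj {α β : Type*} (a : Equiv.Perm α) (b : Equiv.Perm β) (f : α → β)
    (h : ∀ x, f (a x) = b (f x)) : ∀ (k : ℤ) (x : α), f ((a ^ k) x) = (b ^ k) (f x) := by
  have hinv : ∀ x, f (a⁻¹ x) = b⁻¹ (f x) := by
    intro x
    have := h (a⁻¹ x)
    rw [Equiv.Perm.coe_inv, Equiv.apply_symm_apply] at this
    rw [this, Equiv.Perm.coe_inv, Equiv.Perm.coe_inv, Equiv.symm_apply_apply]
  intro k
  induction k using Int.induction_on with
  | zero => simp
  | succ i ih =>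
    intro x
    rw [zpow_add_one, zpow_add_one, Equiv.Perm.mul_apply, Equiv.Perm.mul_apply, ih, h]
  | pred i ih =>
    intro x
    rw [zpow_sub_one, zpow_sub_one, Equiv.Perm.mul_apply, Equiv.Perm.mul_apply, ih, hinv]

lemma range_eq_of_sameCycle {α : Type*} (f : Equiv.Perm α) {x y : α}
    (h : f.SameCycle x y) :
    (Set.range fun k : ℤ => (f ^ k) x) = Set.range fun k : ℤ => (f ^ k) y := by
  obtain ⟨i, hi⟩ := h
  ext c
  simp only [Set.mem_range]
  constructor
  · rintro ⟨k, rfl⟩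
    exact ⟨k - i, by rw [← hi, ← Equiv.Perm.mul_apply, ← zpow_add, sub_add_cancel]⟩
  · rintro ⟨k, rfl⟩
    exact ⟨k + i, by rw [← hi, ← Equiv.Perm.mul_apply, ← zpow_add]⟩

end PermAux

/-- **Case (3) of Theorem 5.3 (dynamical core).**
Let `(F n, T n, q n)` be an odometer datum with inverse limit `Z` and induced odometer
`T`.  If the number of orbits of `T n` on `F n` is unbounded as `n → ∞`, then `Z`
contains an infinite family of pairwise disjoint nonempty closed `T`-invariant subsets;
in particular `T` has infinitely many distinct minimal sets in `Z`. -/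
theorem odometer_unbounded_orbit_count_infinitely_many_minimal_sets
    (F : ℕ → Type*) [∀ n, TopologicalSpace (F n)] [∀ n, DiscreteTopology (F n)]
    [∀ n, Fintype (F n)] [∀ n, Nonempty (F n)]
    (T : ∀ n, Equiv.Perm (F n)) (q : ∀ n, F (n + 1) → F n)
    (hq : ∀ n, Function.Surjective (q n))
    (hcomm : ∀ n x, q n (T (n + 1) x) = T n (q n x))
    (hunbounded : ∀ N : ℕ, ∃ n : ℕ, N ≤ Nat.card { s : Set (F n) // IsOrbitOf (T n) s }) :
    ∃ C : ℕ → Set { z : ∀ n, F n // ∀ n, q n (z (n + 1)) = z n },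
      Pairwise (Function.onFun Disjoint C) ∧
      (∀ i, (C i).Nonempty) ∧
      (∀ i, IsClosed (C i)) ∧
      (∀ i, (odoPerm F T q hcomm) '' (C i) = C i) ∧
      (∀ i, ∀ z ∈ C i,
        C i ⊆ closure (Set.range fun k : ℤ => ((odoPerm F T q hcomm) ^ k) z)) := by
  classical
  set Z := { z : ∀ n, F n // ∀ n, q n (z (n + 1)) = z n } with hZdef
  set σ := odoPerm F T q hcomm with hσdef
  -- projection of iterates
  have hproj : ∀ (k : ℤ) (z : Z) (m : ℕ), ((σ ^ k) z).1 m = ((T m) ^ k) (z.1 m) :=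
    fun k z m => zpow_semiconj σ (T m) (fun z => z.1 m) (fun _ => rfl) k z
  -- downward agreement
  have hagree : ∀ (z w : Z) (m n : ℕ), m ≤ n → z.1 n = w.1 n → z.1 m = w.1 m := by
    intro z w m n h
    induction n, h using Nat.le_induction with
    | base => exact id
    | succ n hmn ih =>
      intro he
      apply ih
      rw [← z.2 n, ← w.2 n, he]
  -- the setoid of "same orbit chain"
  letI R : Setoid Z := ⟨fun z w => ∀ n, (T n).SameCycle (z.1 n) (w.1 n),
    ⟨fun z n => Equiv.Perm.SameCycle.refl _ _,
     fun h n => (h n).symm,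
     fun h1 h2 n => (h1 n).trans (h2 n)⟩⟩
  have hinfQ : Infinite (Quotient R) := by
    rw [← not_finite_iff_infinite]
    intro hfin
    obtain ⟨n, hn⟩ := hunbounded (Nat.card (Quotient R) + 1)
    set φ : Quotient R → { s : Set (F n) // IsOrbitOf (T n) s } :=
      Quotient.lift
        (fun z : Z => (⟨Set.range fun k : ℤ => ((T n) ^ k) (z.1 n), z.1 n, rfl⟩ :
          { s : Set (F n) // IsOrbitOf (T n) s }))
        (fun z w h => Subtype.ext (range_eq_of_sameCycle (T n) (h n))) with hφ
    have hφs : Function.Surjective φ := by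
      rintro ⟨s, x, rfl⟩
      obtain ⟨z, hz, hzn⟩ := exists_chain_through q hq n x
      refine ⟨Quotient.mk R ⟨z, hz⟩, Subtype.ext ?_⟩
      show (Set.range fun k : ℤ => ((T n) ^ k) (z n)) = _
      rw [hzn]
    have := Nat.card_le_card_of_surjective φ hφs
    omega
  letI := hinfQ
  let e : ℕ ↪ Quotient R := Infinite.natEmbedding (Quotient R)
  let zi : ℕ → Z := fun i => (e i).out
  refine ⟨fun i => {w : Z | ∀ n, (T n).SameCycle ((zi i).1 n) (w.1 n)}, ?_, ?_, ?_, ?_, ?_⟩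
  · -- pairwise disjoint
    intro i j hij
    rw [Function.onFun, Set.disjoint_left]
    intro w hwi hwj
    apply hij
    apply e.injective
    rw [← Quotient.out_eq (e i), ← Quotient.out_eq (e j)]
    exact Quotient.sound (fun n => (hwi n).trans ((hwj n).symm))
  · -- nonempty
    exact fun i => ⟨zi i, fun n => Equiv.Perm.SameCycle.refl _ _⟩
  · -- closed
    intro i
    have : {w : Z | ∀ n, (T n).SameCycle ((zi i).1 n) (w.1 n)} =
        ⋂ n, (fun w : Z => w.1 n) ⁻¹' {y | (T n).SameCycle ((zi i).1 n) y} := by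
      ext w; simp [Set.mem_iInter]
    show IsClosed {w : Z | ∀ n, (T n).SameCycle ((zi i).1 n) (w.1 n)}
    rw [this]
    exact isClosed_iInter fun n =>
      IsClosed.preimage ((continuous_apply n).comp continuous_subtype_val)
        (isClosed_discrete _)
  · -- invariance
    intro i
    ext w
    constructor
    · rintro ⟨v, hv, rfl⟩
      intro n
      exact (hv n).trans ⟨1, by rw [zpow_one]; rfl⟩
    · intro hw
      refine ⟨σ.symm w, fun n => ?_, σ.apply_symm_apply w⟩
      show (T n).SameCycle _ ((T n).symm (w.1 n))
      exact (hw n).trans ⟨-1, by rw [zpow_neg_one]; rfl⟩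
  · -- density
    intro i z hz w hw
    rw [mem_closure_iff]
    intro U hU hwU
    obtain ⟨V, hV, rfl⟩ := isOpen_induced_iff.mp hU
    obtain ⟨I, u, hu, hIV⟩ := isOpen_pi_iff.mp hV w.1 hwU
    set n := I.sup id with hn
    obtain ⟨k, hk⟩ := ((hz n).symm.trans (hw n) : (T n).SameCycle (z.1 n) (w.1 n))
    have hag : ∀ m, m ≤ n → ((σ ^ k) z).1 m = w.1 m := by
      intro m hm
      refine hagree _ _ m n hm ?_
      rw [hproj]; exact hk
    refine ⟨(σ ^ k) z, ?_, k, rfl⟩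
    apply hIV
    intro a ha
    rw [Set.mem_preimage] at *
    show ((σ ^ k) z).1 a ∈ u a
    rw [hag a (Finset.le_sup (f := id) ha)]
    exact (hu a ha).2
end
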